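/- For p > 1, the function G'(p) = ln(1 + 1/(p²−1)) − 1/(p²+p) is positive. -/

import Mathlib

open Real

theorem stmt_7 (p : ℝ) (hp : 1 < p) :
    0 < Real.log (1 + 1 / (p ^ 2 - 1)) - 1 / (p ^ 2 + p) := by
  have hp0 : 0 < p := lt_trans one_pos hp
  have h1 : 0 < p ^ 2 - 1 := by nlinarith
  have h2 : (0:ℝ) < p ^ 2 := by positivity
  have hx : 1 + 1 / (p ^ 2 - 1) = p ^ 2 / (p ^ 2 - 1) := by
    field_simp
    ring
  have hy : (p ^ 2 - 1) / p ^ 2 ≠ 1 := by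
    intro h
    rw [div_eq_one_iff_eq (ne_of_gt h2)] at h
    linarith
  have hlt : Real.log ((p ^ 2 - 1) / p ^ 2) < (p ^ 2 - 1) / p ^ 2 - 1 :=
    Real.log_lt_sub_one_of_pos (by positivity) hy
  have hlog : Real.log ((p ^ 2 - 1) / p ^ 2) = - Real.log (p ^ 2 / (p ^ 2 - 1)) := by
    rw [Real.log_div (by linarith) (by positivity), Real.log_div (by positivity) (by linarith)]
    ring
  have key : 1 / p ^ 2 < Real.log (p ^ 2 / (p ^ 2 - 1)) := by
    rw [hlog] at hlt
    have h3 : (p ^ 2 - 1) / p ^ 2 - 1 = - (1 / p ^ 2) := by field_simp; ring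
    linarith [hlt.trans_eq h3]
  have hfrac : 1 / (p ^ 2 + p) < 1 / p ^ 2 := by
    apply one_div_lt_one_div_of_lt h2
    linarith
  rw [hx]
  linarith
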